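/- Let a ∈ ℝ and define X : ℝ² → ℝ³ by X(u,v) = ( (sinh a − cosh a)·(u²v/2 − v³/6) + v·cosh a + u²/2 − v²/2 − 1 , u + (sinh a − cosh a)·u·v , (sinh a − cosh a)·(u²v/2 − v³/6) + v·sinh a + u²/2 − v²/2 ). Then: (i) each coordinate function of X is harmonic on ℝ² (∂²X_k/∂u² + ∂²X_k/∂v² = 0); and (ii) X is Lorentz-conformal, i.e. ⟨X_u,X_u⟩_L = ⟨X_v,X_v⟩_L and ⟨X_u,X_v⟩_L = 0 everywhere. -/

import Mathlib

open Real

/-- Lorentzian inner product on ℝ³: ⟨p,q⟩ = p₁q₁ + p₂q₂ − p₃q₃. -/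
noncomputable def lorentz (p q : ℝ × ℝ × ℝ) : ℝ :=
  p.1 * q.1 + p.2.1 * q.2.1 - p.2.2 * q.2.2

/-- First coordinate of the Björling surface based on a circle with lightlike axis. -/
noncomputable def X1 (a u v : ℝ) : ℝ :=
  (sinh a - cosh a) * (u^2 * v / 2 - v^3 / 6) + v * cosh a + u^2 / 2 - v^2 / 2 - 1

/-- Second coordinate of the Björling surface based on a circle with lightlike axis. -/
noncomputable def X2 (a u v : ℝ) : ℝ :=
  u + (sinh a - cosh a) * u * v

/-- Third coordinate of the Björling surface based on a circle with lightlike axis. -/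
noncomputable def X3 (a u v : ℝ) : ℝ :=
  (sinh a - cosh a) * (u^2 * v / 2 - v^3 / 6) + v * sinh a + u^2 / 2 - v^2 / 2

/-- Partial derivative of X with respect to u. -/
noncomputable def Xu (a u v : ℝ) : ℝ × ℝ × ℝ :=
  (deriv (fun s => X1 a s v) u, deriv (fun s => X2 a s v) u, deriv (fun s => X3 a s v) u)

/-- Partial derivative of X with respect to v. -/
noncomputable def Xv (a u v : ℝ) : ℝ × ℝ × ℝ :=
  (deriv (fun t => X1 a u t) v, deriv (fun t => X2 a u t) v, deriv (fun t => X3 a u t) v)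

lemma hasDerivAt_cubic (p q r s u : ℝ) :
    HasDerivAt (fun x : ℝ => p*x^3 + q*x^2 + r*x + s) (3*p*u^2 + 2*q*u + r) u := by
  have h2 : HasDerivAt (fun x : ℝ => x^2) (2*u) u := by simpa using hasDerivAt_pow 2 u
  have h3 : HasDerivAt (fun x : ℝ => x^3) (3*u^2) u := by simpa using hasDerivAt_pow 3 u
  have := (((h3.const_mul p).add (h2.const_mul q)).add ((hasDerivAt_id u).const_mul r)).add_const s
  exact this.congr_deriv (by ring)

lemma deriv_cubic (p q r s : ℝ) :
    deriv (fun x : ℝ => p*x^3 + q*x^2 + r*x + s) = fun u => 3*p*u^2 + 2*q*u + r :=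
  funext fun u => (hasDerivAt_cubic p q r s u).deriv

/-- The Björling surface based on a circle with lightlike axis is harmonic and
Lorentz-conformal. -/
theorem lightlike_axis_harmonic_conformal (a : ℝ) :
    (∀ u v : ℝ,
      deriv (deriv (fun s => X1 a s v)) u + deriv (deriv (fun t => X1 a u t)) v = 0 ∧
      deriv (deriv (fun s => X2 a s v)) u + deriv (deriv (fun t => X2 a u t)) v = 0 ∧
      deriv (deriv (fun s => X3 a s v)) u + deriv (deriv (fun t => X3 a u t)) v = 0) ∧
    (∀ u v : ℝ,
      lorentz (Xu a u v) (Xu a u v) = lorentz (Xv a u v) (Xv a u v) ∧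
      lorentz (Xu a u v) (Xv a u v) = 0) := by
  set c := sinh a - cosh a with hc
  have e1u : ∀ u v : ℝ, (fun s => X1 a s v)
      = fun x : ℝ => 0*x^3 + (c*v/2 + 1/2)*x^2 + 0*x + (-(c*v^3/6) + v*cosh a - v^2/2 - 1) := by
    intro u v; funext x; simp only [X1, ← hc]; ring
  have e1v : ∀ u v : ℝ, (fun t => X1 a u t)
      = fun x : ℝ => (-c/6)*x^3 + (-1/2)*x^2 + (c*u^2/2 + cosh a)*x + (u^2/2 - 1) := by
    intro u v; funext x; simp only [X1, ← hc]; ring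
  have e2u : ∀ u v : ℝ, (fun s => X2 a s v)
      = fun x : ℝ => 0*x^3 + 0*x^2 + (1 + c*v)*x + 0 := by
    intro u v; funext x; simp only [X2, ← hc]; ring
  have e2v : ∀ u v : ℝ, (fun t => X2 a u t)
      = fun x : ℝ => 0*x^3 + 0*x^2 + (c*u)*x + u := by
    intro u v; funext x; simp only [X2, ← hc]; ring
  have e3u : ∀ u v : ℝ, (fun s => X3 a s v)
      = fun x : ℝ => 0*x^3 + (c*v/2 + 1/2)*x^2 + 0*x + (-(c*v^3/6) + v*sinh a - v^2/2) := by
    intro u v; funext x; simp only [X3, ← hc]; ring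
  have e3v : ∀ u v : ℝ, (fun t => X3 a u t)
      = fun x : ℝ => (-c/6)*x^3 + (-1/2)*x^2 + (c*u^2/2 + sinh a)*x + (u^2/2) := by
    intro u v; funext x; simp only [X3, ← hc]; ring
  have key : cosh a ^ 2 - sinh a ^ 2 = 1 := Real.cosh_sq_sub_sinh_sq a
  constructor
  · intro u v
    rw [e1u u v, e1v u v, e2u u v, e2v u v, e3u u v, e3v u v]
    simp only [deriv_cubic]
    have q : ∀ p q r : ℝ, (fun x : ℝ => 3*p*x^2 + 2*q*x + r)
        = fun x : ℝ => 0*x^3 + (3*p)*x^2 + (2*q)*x + r := by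
      intro p q r; funext x; ring
    simp only [q, deriv_cubic]
    refine ⟨by ring, by ring, by ring⟩
  · intro u v
    simp only [lorentz, Xu, Xv, e1u u v, e1v u v, e2u u v, e2v u v, e3u u v, e3v u v,
      deriv_cubic]
    constructor
    · linear_combination (-1 : ℝ) * key
    · ring
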